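/- Let α, β, ρ, x0, ū be positive real numbers satisfying (β − ρ·x0)·ū − α·x0 > 0, and let t_f > 0. Then there exists a unique t_sw ∈ (0, t_f) such that F(t_sw) = x0, i.e. such that x0 = exp((−α − ρ·ū)·(t_f − t_sw))·(x0·exp(−α·t_sw) − β·ū/(α + ρ·ū)) + β·ū/(α + ρ·ū). -/

import Mathlib

/-- `F τ` is the terminal value `x(t_f)` of the bilinear furnace model started at
`x(0) = x0`, with input `u ≡ 0` on `[0, τ)` and `u ≡ ū` on `[τ, t_f]`. -/
noncomputable def F (α β ρ x0 ubar tf τ : ℝ) : ℝ :=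
  Real.exp ((-α - ρ * ubar) * (tf - τ)) *
      (x0 * Real.exp (-α * τ) - β * ubar / (α + ρ * ubar)) +
    β * ubar / (α + ρ * ubar)

/-- Under assumption (A), for every terminal time `t_f > 0` there is a
unique switching time `t_sw ∈ (0, t_f)` with `F(t_sw) = x0`. -/
theorem stmt_10 (α β ρ x0 ubar : ℝ)
    (hα : 0 < α) (hβ : 0 < β) (hρ : 0 < ρ) (hx0 : 0 < x0) (hu : 0 < ubar)
    (hA : (β - ρ * x0) * ubar - α * x0 > 0) (tf : ℝ) (htf : 0 < tf) :
    ∃! tsw : ℝ, tsw ∈ Set.Ioo 0 tf ∧ F α β ρ x0 ubar tf tsw = x0 := by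
  have hk0 : 0 < α + ρ * ubar := by positivity
  have hkne : α + ρ * ubar ≠ 0 := ne_of_gt hk0
  set c : ℝ := β * ubar / (α + ρ * ubar) with hc
  have hck : c * (α + ρ * ubar) = β * ubar := div_mul_cancel₀ _ hkne
  have hcx0 : x0 < c := by
    rw [hc, lt_div_iff₀ hk0]; nlinarith
  -- continuity
  have hcont : Continuous (F α β ρ x0 ubar tf) := by
    unfold F; continuity
  -- derivative
  have hderiv : ∀ τ : ℝ, HasDerivAt (F α β ρ x0 ubar tf)
      (Real.exp ((-α - ρ * ubar) * (tf - τ)) *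
        (ρ * ubar * x0 * Real.exp (-α * τ) - β * ubar)) τ := by
    intro τ
    have h1 : HasDerivAt (fun τ : ℝ => Real.exp ((-α - ρ * ubar) * (tf - τ)))
        (Real.exp ((-α - ρ * ubar) * (tf - τ)) * (α + ρ * ubar)) τ := by
      have hin : HasDerivAt (fun τ : ℝ => (-α - ρ * ubar) * (tf - τ)) (α + ρ * ubar) τ := by
        have := ((hasDerivAt_id τ).const_sub tf).const_mul (-α - ρ * ubar)
        exact this.congr_deriv (by ring)
      exact hin.exp
    have h2 : HasDerivAt (fun τ : ℝ => x0 * Real.exp (-α * τ) - c)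
        (x0 * (Real.exp (-α * τ) * (-α))) τ := by
      have hin : HasDerivAt (fun τ : ℝ => -α * τ) (-α) τ := by
        simpa using (hasDerivAt_id τ).const_mul (-α)
      exact ((hin.exp).const_mul x0).sub_const c
    have h3 := (h1.mul h2).add_const c
    refine h3.congr_deriv ?_
    have : Real.exp ((-α - ρ * ubar) * (tf - τ)) * (α + ρ * ubar) *
        (x0 * Real.exp (-α * τ) - c) +
        Real.exp ((-α - ρ * ubar) * (tf - τ)) * (x0 * (Real.exp (-α * τ) * (-α)))
        = Real.exp ((-α - ρ * ubar) * (tf - τ)) *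
          (ρ * ubar * x0 * Real.exp (-α * τ) - c * (α + ρ * ubar)) := by ring
    rw [this, hck]
  have hβρ : ρ * x0 < β := by nlinarith
  -- strict antitonicity on Icc 0 tf
  have hanti : StrictAntiOn (F α β ρ x0 ubar tf) (Set.Icc 0 tf) := by
    apply strictAntiOn_of_deriv_neg (convex_Icc 0 tf) hcont.continuousOn
    intro x hx
    rw [interior_Icc] at hx
    rw [(hderiv x).deriv]
    have he : Real.exp (-α * x) ≤ 1 := by
      apply Real.exp_le_one_iff.mpr
      nlinarith [hx.1]
    have : ρ * ubar * x0 * Real.exp (-α * x) - β * ubar < 0 := by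
      have h4 := mul_le_mul_of_nonneg_left he
        (le_of_lt (by positivity : (0:ℝ) < ρ * ubar * x0))
      nlinarith
    have hp : 0 < Real.exp ((-α - ρ * ubar) * (tf - x)) := Real.exp_pos _
    nlinarith
  -- endpoint values
  have hF0 : x0 < F α β ρ x0 ubar tf 0 := by
    unfold F
    rw [mul_zero, Real.exp_zero, mul_one, sub_zero]
    have h1 : Real.exp ((-α - ρ * ubar) * tf) < 1 := by
      apply Real.exp_lt_one_iff.mpr
      nlinarith
    have h2 : 0 < Real.exp ((-α - ρ * ubar) * tf) := Real.exp_pos _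
    nlinarith
  have hFtf : F α β ρ x0 ubar tf tf < x0 := by
    unfold F
    rw [sub_self, mul_zero, Real.exp_zero, one_mul]
    have h1 : Real.exp (-α * tf) < 1 := by
      apply Real.exp_lt_one_iff.mpr
      nlinarith
    have h2 : 0 < Real.exp (-α * tf) := Real.exp_pos _
    nlinarith
  -- existence via IVT
  obtain ⟨tsw, htsw, hFtsw⟩ :=
    intermediate_value_Ioo' (le_of_lt htf) hcont.continuousOn (Set.mem_Ioo.mpr ⟨hFtf, hF0⟩)
  refine ⟨tsw, ⟨htsw, hFtsw⟩, ?_⟩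
  rintro t ⟨ht, hFt⟩
  exact hanti.injOn (Set.mem_Icc_of_Ioo ht) (Set.mem_Icc_of_Ioo htsw) (by rw [hFt, hFtsw])
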